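/- Let u≥3 be an integer. For every Λ∈P⁺ᵘ: 𝒮ᵘ_{vac,Λ} = (8/(√3·u))·sin(π(Λ₁+1)/u)·sin(π(Λ₂+1)/u)·sin(π(Λ₁+Λ₂+2)/u), and in particular 𝒮ᵘ_{vac,Λ} is a strictly positive real number. -/

import Mathlib

noncomputable section

open Complex

/-- The six elements of the Weyl group `S₃` of sl₃ acting on weights in
Dynkin-label coordinates: `id, w₁, w₂, w₁w₂, w₂w₁, w₃`. -/
def wmap (w : Fin 6) (x : ℂ × ℂ) : ℂ × ℂ :=
  ![x, (-x.1, x.1 + x.2), (x.1 + x.2, -x.2), (-x.1 - x.2, x.1),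
    (x.2, -x.1 - x.2), (-x.2, -x.1)] w

/-- The signs of the six Weyl group elements. -/
def wdet : Fin 6 → ℤ := ![1, -1, -1, 1, 1, -1]

/-- The normalised invariant bilinear form of sl₃ in Dynkin-label coordinates. -/
def bform (x y : ℂ × ℂ) : ℂ :=
  (2 * x.1 * y.1 + x.1 * y.2 + x.2 * y.1 + 2 * x.2 * y.2) / 3

/-- The Weyl vector `ρ = (1,1)`. -/
def rho : ℂ × ℂ := (1, 1)

/-- The set `P⁺ᵘ` of triples of nonnegative integers summing to `u-3`. -/
def Pplus (u : ℕ) : Finset (ℕ × ℕ × ℕ) :=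
  (Finset.range u ×ˢ Finset.range u ×ˢ Finset.range u).filter
    (fun l => l.1 + l.2.1 + l.2.2 = u - 3)

/-- The finite part `λ̄ = (λ₁,λ₂)` of a triple `λ = (λ₀,λ₁,λ₂)`. -/
def bar (l : ℕ × ℕ × ℕ) : ℂ × ℂ := ((l.2.1 : ℂ), (l.2.2 : ℂ))

/-- The level-`(u-3)` sl₃ WZW S-matrix entry `𝒮ᵘ_{λ,λ′}`. -/
def ScalP (u : ℕ) (l l' : ℕ × ℕ × ℕ) : ℂ :=
  (-I / (Real.sqrt 3 * u)) *
    ∑ w : Fin 6, (wdet w : ℂ) *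
      exp (-2 * Real.pi * I * bform (wmap w (bar l + rho)) (bar l' + rho) / u)

/-- The vacuum weight `vac = (u-3,0,0)`. -/
def vac (u : ℕ) : ℕ × ℕ × ℕ := (u - 3, 0, 0)

lemma eR (t : ℝ) : Complex.exp ((t:ℂ) * I) = (Real.cos t : ℂ) + (Real.sin t : ℂ) * I := by
  rw [Complex.exp_mul_I]; simp

lemma pair (t : ℝ) : Complex.exp ((-t : ℝ) * I) - Complex.exp ((t:ℝ) * I)
    = -2 * (Real.sin t : ℂ) * I := by
  rw [eR, eR]; push_cast [Real.sin_neg, Real.cos_neg]; ring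

lemma trig (x y : ℝ) :
    Real.sin (2*x) + Real.sin (2*y) - Real.sin (2*x + 2*y) =
      4 * Real.sin x * Real.sin y * Real.sin (x + y) := by
  have h : 2*x + 2*y = 2*(x+y) := by ring
  rw [h, Real.sin_two_mul, Real.sin_two_mul, Real.sin_two_mul, Real.sin_add, Real.cos_add]
  linear_combination (-2*Real.sin x*Real.cos x)*(Real.sin_sq_add_cos_sq y) +
    (-2*Real.sin y*Real.cos y)*(Real.sin_sq_add_cos_sq x)

theorem stmt16 (u : ℕ) (hu : 3 ≤ u) (L : ℕ × ℕ × ℕ) (hL : L ∈ Pplus u) :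
    ScalP u (vac u) L =
      (((8 / (Real.sqrt 3 * u)) * Real.sin (Real.pi * (L.2.1 + 1) / u) *
        Real.sin (Real.pi * (L.2.2 + 1) / u) *
        Real.sin (Real.pi * (L.2.1 + L.2.2 + 2) / u) : ℝ) : ℂ) ∧
    0 < (8 / (Real.sqrt 3 * u)) * Real.sin (Real.pi * (L.2.1 + 1) / u) *
        Real.sin (Real.pi * (L.2.2 + 1) / u) *
        Real.sin (Real.pi * (L.2.1 + L.2.2 + 2) / u) := by
  have hmem := hL
  simp only [Pplus, Finset.mem_filter, Finset.mem_product] at hmem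
  have hsum : L.1 + L.2.1 + L.2.2 = u - 3 := hmem.2
  have h1 : L.2.1 + 1 < u := by omega
  have h2 : L.2.2 + 1 < u := by omega
  have h3 : L.2.1 + L.2.2 + 2 < u := by omega
  have huR : (0:ℝ) < u := by positivity
  have hpi := Real.pi_pos
  have sinpos : ∀ n : ℕ, 0 < n → n < u → 0 < Real.sin (Real.pi * (n : ℝ) / u) := by
    intro n hn hnu
    apply Real.sin_pos_of_pos_of_lt_pi
    · positivity
    · rw [div_lt_iff₀ huR]
      have : (n:ℝ) < u := by exact_mod_cast hnu
      nlinarith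
  constructor
  · have hS : ScalP u (vac u) L = (-I / (Real.sqrt 3 * u)) *
        ((cexp ((-(2*(Real.pi*(L.2.1+1)/u) + 2*(Real.pi*(L.2.2+1)/u)) : ℝ) * I)
          - cexp (((2*(Real.pi*(L.2.1+1)/u) + 2*(Real.pi*(L.2.2+1)/u)) : ℝ) * I))
        - (cexp ((-(2*(Real.pi*(L.2.2+1)/u)) : ℝ) * I) - cexp (((2*(Real.pi*(L.2.2+1)/u)) : ℝ) * I))
        - (cexp ((-(2*(Real.pi*(L.2.1+1)/u)) : ℝ) * I) - cexp (((2*(Real.pi*(L.2.1+1)/u)) : ℝ) * I))) := by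
      simp only [ScalP, Fin.sum_univ_succ, Fin.sum_univ_zero, wmap, wdet, bar, vac, rho, bform,
        Matrix.cons_val_zero, Matrix.cons_val_succ, Int.cast_one, Int.cast_neg, one_mul, neg_mul,
        Prod.fst_add, Prod.snd_add, Nat.cast_zero, add_zero, zero_add, Prod.mk_add_mk]
      push_cast
      ring_nf
    rw [hS, pair (2*(Real.pi*(L.2.1+1)/u) + 2*(Real.pi*(L.2.2+1)/u)),
      pair (2*(Real.pi*(L.2.2+1)/u)), pair (2*(Real.pi*(L.2.1+1)/u))]
    have hAB : Real.pi * ((L.2.1:ℝ) + (L.2.2:ℝ) + 2) / u =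
        Real.pi * ((L.2.1:ℝ) + 1) / u + Real.pi * ((L.2.2:ℝ) + 1) / u := by
      rw [← add_div]; congr 1; ring
    rw [hAB]
    have key : (8 / (Real.sqrt 3 * (u:ℝ))) * Real.sin (Real.pi * ((L.2.1:ℝ)+1) / u) *
        Real.sin (Real.pi * ((L.2.2:ℝ)+1) / u) *
        Real.sin (Real.pi * ((L.2.1:ℝ)+1) / u + Real.pi * ((L.2.2:ℝ)+1) / u) =
        (2 / (Real.sqrt 3 * (u:ℝ))) *
          (Real.sin (2*(Real.pi * ((L.2.1:ℝ)+1) / u)) + Real.sin (2*(Real.pi * ((L.2.2:ℝ)+1) / u))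
            - Real.sin (2*(Real.pi * ((L.2.1:ℝ)+1) / u) + 2*(Real.pi * ((L.2.2:ℝ)+1) / u))) := by
      rw [trig]; ring
    rw [key]
    push_cast [-Complex.ofReal_sin]
    linear_combination
      (-(2*((Real.sin (2*(Real.pi*((L.2.1:ℝ)+1)/u)) : ℂ))
          + 2*((Real.sin (2*(Real.pi*((L.2.2:ℝ)+1)/u)) : ℂ))
          - 2*((Real.sin (2*(Real.pi*((L.2.1:ℝ)+1)/u) + 2*(Real.pi*((L.2.2:ℝ)+1)/u)) : ℂ)))
        / ((Real.sqrt 3 : ℂ) * (u:ℂ))) * Complex.I_sq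
  · have s1 := sinpos (L.2.1+1) (by omega) h1
    have s2 := sinpos (L.2.2+1) (by omega) h2
    have s3 := sinpos (L.2.1+L.2.2+2) (by omega) h3
    push_cast at s1 s2 s3
    have h8 : 0 < 8 / (Real.sqrt 3 * (u:ℝ)) := by positivity
    positivity
end
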